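/- arXiv:2604.00309 — 2 statements merged into one kernel-verified Lean document; each statement's English description precedes it below -/
import Mathlib

section
/- Let n, p ≥ 1, let P ∈ ℝ^{n×n} be positive semidefinite, let A ∈ ℝ^{n×n}, let C ∈ ℝ^{p×n} with induced 2-norm ‖C‖ ≤ c̄, let Q ∈ ℝ^{n×n} be positive definite with Q ⪰ q·Iₙ for some q ∈ (0,∞), and let R ∈ ℝ^{p×p} be positive definite with R ⪰ r·I_p for some r ∈ (0,∞). Define the prior covariance P⁺ = A P Aᵀ + Q and the updated covariance P' = P⁺ − P⁺ Cᵀ (C P⁺ Cᵀ + R)⁻¹ C P⁺. Then P' is positive definite and P' ⪰ (q⁻¹ + c̄²·r⁻¹)⁻¹ · Iₙ. -/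
open Matrix

set_option linter.unusedSectionVars false

section helpers

variable {m l : Type*} [Fintype m] [Fintype l] [DecidableEq m] [DecidableEq l]

lemma conjT_real (B : Matrix m l ℝ) : Bᴴ = Bᵀ := by
  ext i j; simp [conjTranspose_apply]

lemma psd_smul {M : Matrix m m ℝ} (h : M.PosSemidef) {a : ℝ} (ha : 0 ≤ a) :
    (a • M).PosSemidef := by
  refine Matrix.posSemidef_iff_dotProduct_mulVec.mpr ⟨?_, ?_⟩
  · unfold Matrix.IsHermitian
    rw [conjTranspose_smul, star_trivial, h.1]
  · intro x
    rw [smul_mulVec, dotProduct_smul]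
    exact smul_nonneg ha (h.dotProduct_mulVec_nonneg x)

lemma psd_conj {A : Matrix m m ℝ} (hA : A.PosSemidef) (B : Matrix l m ℝ) :
    (B * A * Bᵀ).PosSemidef := by
  rw [← conjT_real]; exact hA.mul_mul_conjTranspose_same B

/-- `W ⪰ s·1 ⇒ W⁻¹ ⪯ s⁻¹·1`. -/
lemma inv_upper {W : Matrix m m ℝ} (hW : W.PosDef) {s : ℝ} (hs : 0 < s)
    (h : (W - s • 1).PosSemidef) : (s⁻¹ • (1 : Matrix m m ℝ) - W⁻¹).PosSemidef := by
  have hd : IsUnit W.det := hW.det_pos.ne'.isUnit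
  have h1 : W⁻¹ * W = 1 := nonsing_inv_mul _ hd
  have h2 : W * W⁻¹ = 1 := mul_nonsing_inv _ hd
  set D := W - s • (1 : Matrix m m ℝ) with hD
  have key : s⁻¹ • (1 : Matrix m m ℝ) - W⁻¹ = s⁻¹ • (W⁻¹ * (D * D + s • D) * W⁻¹) := by
    have e1 : D * D + s • D = W * W - s • W := by
      rw [hD]
      simp only [Matrix.sub_mul, Matrix.mul_sub, Matrix.smul_mul, Matrix.mul_smul,
        smul_smul, Matrix.one_mul, Matrix.mul_one, smul_sub]
      abel
    rw [e1, Matrix.mul_sub, Matrix.sub_mul, Matrix.mul_smul, ← Matrix.mul_assoc,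
      h1, Matrix.one_mul, Matrix.smul_mul, h2, smul_sub, smul_smul,
      inv_mul_cancel₀ hs.ne', one_smul, Matrix.one_mul]
  rw [key]
  have hDD : (D * D).PosSemidef := by
    have : D * D = Dᴴ * D := by rw [h.1]
    rw [this]; exact posSemidef_conjTranspose_mul_self D
  have hsum : (D * D + s • D).PosSemidef := hDD.add (psd_smul h hs.le)
  have hWinvH : W⁻¹ᵀ = W⁻¹ := by
    have := hW.isHermitian.inv
    rwa [Matrix.IsHermitian, conjT_real] at this
  have hconj : (W⁻¹ * (D * D + s • D) * W⁻¹).PosSemidef := by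
    have := psd_conj hsum W⁻¹
    rwa [hWinvH] at this
  exact psd_smul hconj (by positivity)

/-- `D ⪯ s·1 ⇒ D⁻¹ ⪰ s⁻¹·1`. -/
lemma inv_lower {D : Matrix m m ℝ} (hD : D.PosDef) {s : ℝ} (hs : 0 < s)
    (h : (s • (1 : Matrix m m ℝ) - D).PosSemidef) :
    (D⁻¹ - s⁻¹ • (1 : Matrix m m ℝ)).PosSemidef := by
  have hd : IsUnit D.det := hD.det_pos.ne'.isUnit
  have h1 : D⁻¹ * D = 1 := nonsing_inv_mul _ hd
  have h2 : D * D⁻¹ = 1 := mul_nonsing_inv _ hd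
  set E := s • (1 : Matrix m m ℝ) - D with hE
  have key : D⁻¹ - s⁻¹ • (1 : Matrix m m ℝ) = (s⁻¹ * s⁻¹) • (E * D⁻¹ * E + E) := by
    have e1 : E * D⁻¹ * E = (s * s) • D⁻¹ - (2 * s) • (1 : Matrix m m ℝ) + D := by
      rw [hE]
      simp only [Matrix.sub_mul, Matrix.mul_sub, Matrix.smul_mul, Matrix.mul_smul,
        smul_smul, Matrix.one_mul, Matrix.mul_one, smul_sub, h1, h2]
      rw [two_mul, add_smul]
      abel
    rw [e1, hE]
    rw [smul_add, smul_sub, smul_add, smul_sub, smul_smul, smul_smul, smul_smul]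
    have hsne : s ≠ 0 := hs.ne'
    have c1 : s⁻¹ * s⁻¹ * (s * s) = 1 := by field_simp
    have c2 : s⁻¹ * s⁻¹ * (2 * s) = 2 * s⁻¹ := by field_simp
    have c3 : s⁻¹ * s⁻¹ * s = s⁻¹ := by field_simp
    rw [c1, c2, c3, one_smul, two_mul, add_smul]
    abel
  rw [key]
  have hEH : Eᵀ = E := by
    have := h.1
    rwa [Matrix.IsHermitian, conjT_real] at this
  have hconj : (E * D⁻¹ * E).PosSemidef := by
    have := psd_conj hD.inv.posSemidef E
    rwa [hEH] at this
  exact psd_smul (hconj.add h) (by positivity)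

/-- Woodbury-type identity giving a right inverse for `X⁻¹ + Cᵀ R⁻¹ C`. -/
lemma wood {n' p' : Type*} [Fintype n'] [Fintype p'] [DecidableEq n'] [DecidableEq p']
    (X : Matrix n' n' ℝ) (C : Matrix p' n' ℝ) (R S : Matrix p' p' ℝ)
    (hx : X⁻¹ * X = 1) (hr : R⁻¹ * R = 1) (hs1 : S * S⁻¹ = 1)
    (hcxc : C * X * Cᵀ = S - R) :
    (X⁻¹ + Cᵀ * R⁻¹ * C) * (X - X * Cᵀ * S⁻¹ * C * X) = 1 := by
  have hxc : ∀ t : Matrix n' n' ℝ, X⁻¹ * (X * t) = t := fun t => by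
    rw [← Matrix.mul_assoc, hx, Matrix.one_mul]
  have hmid : ∀ w : Matrix p' n' ℝ, C * (X * (Cᵀ * w)) = (S - R) * w := fun w => by
    rw [← hcxc]; simp only [Matrix.mul_assoc]
  have e2 : ∀ w : Matrix p' n' ℝ, R⁻¹ * (S * (S⁻¹ * w)) = R⁻¹ * w := fun w => by
    rw [← Matrix.mul_assoc S, hs1, Matrix.one_mul]
  have e3 : ∀ w : Matrix p' n' ℝ, R⁻¹ * (R * w) = w := fun w => by
    rw [← Matrix.mul_assoc, hr, Matrix.one_mul]
  simp only [Matrix.mul_sub, Matrix.sub_mul, Matrix.add_mul, Matrix.mul_add,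
    Matrix.mul_assoc, hx, hxc, hmid, e2, e3]
  abel

end helpers

/-- One full step of the discrete-time Riccati recursion (prediction `P⁺ = A P Aᵀ + Q`
followed by measurement update) produces a positive definite covariance bounded below by
`(q⁻¹ + c̄²·r⁻¹)⁻¹ · Iₙ`, where `Q ⪰ q·Iₙ`, `R ⪰ r·I_p`, and the induced 2-norm of `C`
is at most `c̄`. -/
theorem riccati_step_lower_bound
    (n p : ℕ) (hn : 1 ≤ n) (hp : 1 ≤ p)
    (P : Matrix (Fin n) (Fin n) ℝ) (hP : P.PosSemidef)
    (A : Matrix (Fin n) (Fin n) ℝ)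
    (C : Matrix (Fin p) (Fin n) ℝ) (cbar : ℝ)
    (hC : ∀ x : Fin n → ℝ, Real.sqrt ((C *ᵥ x) ⬝ᵥ (C *ᵥ x)) ≤ cbar * Real.sqrt (x ⬝ᵥ x))
    (Q : Matrix (Fin n) (Fin n) ℝ) (q : ℝ) (hq : 0 < q)
    (hQ : Q.PosDef) (hQlo : (Q - q • (1 : Matrix (Fin n) (Fin n) ℝ)).PosSemidef)
    (R : Matrix (Fin p) (Fin p) ℝ) (r : ℝ) (hr : 0 < r)
    (hR : R.PosDef) (hRlo : (R - r • (1 : Matrix (Fin p) (Fin p) ℝ)).PosSemidef) :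
    ((A * P * Aᵀ + Q) -
        (A * P * Aᵀ + Q) * Cᵀ * (C * (A * P * Aᵀ + Q) * Cᵀ + R)⁻¹ * C *
          (A * P * Aᵀ + Q)).PosDef ∧
    ((((A * P * Aᵀ + Q) -
        (A * P * Aᵀ + Q) * Cᵀ * (C * (A * P * Aᵀ + Q) * Cᵀ + R)⁻¹ * C *
          (A * P * Aᵀ + Q))) -
        (q⁻¹ + cbar ^ 2 * r⁻¹)⁻¹ • (1 : Matrix (Fin n) (Fin n) ℝ)).PosSemidef := by
  set X := A * P * Aᵀ + Q with hXdef
  have hAPA : (A * P * Aᵀ).PosSemidef := psd_conj hP A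
  have hX : X.PosDef := Matrix.PosDef.posSemidef_add hAPA hQ
  set S := C * X * Cᵀ + R with hSdef
  have hS : S.PosDef := Matrix.PosDef.posSemidef_add (psd_conj hX.posSemidef C) hR
  have hXd : IsUnit X.det := hX.det_pos.ne'.isUnit
  have hRd : IsUnit R.det := hR.det_pos.ne'.isUnit
  have hSd : IsUnit S.det := hS.det_pos.ne'.isUnit
  set K := X⁻¹ + Cᵀ * R⁻¹ * C with hKdef
  have hKInvEq : K⁻¹ = X - X * Cᵀ * S⁻¹ * C * X := by
    apply Matrix.inv_eq_right_inv
    exact wood X C R S (nonsing_inv_mul _ hXd) (nonsing_inv_mul _ hRd)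
      (mul_nonsing_inv _ hSd) (by rw [hSdef, add_sub_cancel_right])
  have hCR : (Cᵀ * R⁻¹ * C).PosSemidef := by
    have := psd_conj hR.inv.posSemidef Cᵀ
    rwa [transpose_transpose] at this
  have hK : K.PosDef := hX.inv.add_posSemidef hCR
  have part1 : (X - X * Cᵀ * S⁻¹ * C * X).PosDef := hKInvEq ▸ hK.inv
  refine ⟨part1, ?_⟩
  set β := q⁻¹ + cbar ^ 2 * r⁻¹ with hβdef
  have hβ : 0 < β := by positivity
  have hupX : (q⁻¹ • (1 : Matrix (Fin n) (Fin n) ℝ) - X⁻¹).PosSemidef := by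
    refine inv_upper hX hq ?_
    have e : X - q • (1 : Matrix (Fin n) (Fin n) ℝ) = A * P * Aᵀ + (Q - q • 1) := by
      rw [hXdef]; abel
    rw [e]; exact hAPA.add hQlo
  have hupR : (r⁻¹ • (1 : Matrix (Fin p) (Fin p) ℝ) - R⁻¹).PosSemidef := inv_upper hR hr hRlo
  have hCRbound : ((cbar ^ 2 * r⁻¹) • (1 : Matrix (Fin n) (Fin n) ℝ)
      - Cᵀ * R⁻¹ * C).PosSemidef := by
    refine Matrix.posSemidef_iff_dotProduct_mulVec.mpr ⟨?_, ?_⟩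
    · exact ((psd_smul Matrix.PosSemidef.one
        (by positivity : (0:ℝ) ≤ cbar ^ 2 * r⁻¹)).1).sub hCR.1
    · intro x
      set y := C *ᵥ x with hy
      have hyy : 0 ≤ y ⬝ᵥ y := Finset.sum_nonneg fun i _ => mul_self_nonneg _
      have hxx : 0 ≤ x ⬝ᵥ x := Finset.sum_nonneg fun i _ => mul_self_nonneg _
      have h1 : 0 ≤ r⁻¹ * (y ⬝ᵥ y) - y ⬝ᵥ (R⁻¹ *ᵥ y) := by
        have := hupR.dotProduct_mulVec_nonneg y
        simpa [sub_mulVec, smul_mulVec, one_mulVec, dotProduct_sub, dotProduct_smul,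
          smul_eq_mul] using this
      have h2 : y ⬝ᵥ y ≤ cbar ^ 2 * (x ⬝ᵥ x) := by
        have h3 := hC x
        have h4 := mul_self_le_mul_self (Real.sqrt_nonneg (y ⬝ᵥ y)) h3
        rw [Real.mul_self_sqrt hyy] at h4
        calc y ⬝ᵥ y ≤ cbar * Real.sqrt (x ⬝ᵥ x) * (cbar * Real.sqrt (x ⬝ᵥ x)) := h4
          _ = cbar ^ 2 * (Real.sqrt (x ⬝ᵥ x) * Real.sqrt (x ⬝ᵥ x)) := by ring
          _ = cbar ^ 2 * (x ⬝ᵥ x) := by rw [Real.mul_self_sqrt hxx]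
      have hquad : (star x) ⬝ᵥ (((cbar ^ 2 * r⁻¹) • (1 : Matrix (Fin n) (Fin n) ℝ)
          - Cᵀ * R⁻¹ * C) *ᵥ x) = cbar ^ 2 * r⁻¹ * (x ⬝ᵥ x) - y ⬝ᵥ (R⁻¹ *ᵥ y) := by
        have hsx : star x = x := by funext i; simp
        rw [hsx, sub_mulVec, smul_mulVec, one_mulVec, dotProduct_sub, dotProduct_smul,
          smul_eq_mul]
        congr 1
        rw [← Matrix.mulVec_mulVec, ← Matrix.mulVec_mulVec, Matrix.dotProduct_mulVec,
          Matrix.vecMul_transpose, hy]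
      rw [hquad]
      nlinarith [mul_le_mul_of_nonneg_left h2 (le_of_lt (inv_pos.mpr hr))]
  have hKup : (β • (1 : Matrix (Fin n) (Fin n) ℝ) - K).PosSemidef := by
    have e : β • (1 : Matrix (Fin n) (Fin n) ℝ) - K
        = (q⁻¹ • 1 - X⁻¹) + ((cbar ^ 2 * r⁻¹) • 1 - Cᵀ * R⁻¹ * C) := by
      rw [hβdef, hKdef, add_smul]; abel
    rw [e]; exact hupX.add hCRbound
  have hfin := inv_lower hK hβ hKup
  rwa [hKInvEq] at hfin
end

section
/- Let n, p ≥ 1, let J be a finite index set with |J| = ℓ, let e ∈ ℝⁿ, and for each j ∈ J let M_j ∈ ℝ^{p×n}, b_j ∈ ℝᵖ, and W_j ∈ ℝ^{p×p} positive definite. Suppose there exist J̄, E ∈ [0,∞) and α ∈ (0,∞) such that Σ_{j∈J} (M_j e + b_j)ᵀ W_j (M_j e + b_j) ≤ J̄, Σ_{j∈J} b_jᵀ W_j b_j ≤ E, and Σ_{j∈J} M_jᵀ W_j M_j ⪰ α·Iₙ. Then ‖e‖ ≤ √(2(J̄ + E)/α). -/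
open Matrix

lemma psd_diff_bound {p : ℕ} (W : Matrix (Fin p) (Fin p) ℝ) (hW : W.PosSemidef)
    (u b : Fin p → ℝ) :
    (u - b) ⬝ᵥ W *ᵥ (u - b) ≤ 2 * (u ⬝ᵥ W *ᵥ u) + 2 * (b ⬝ᵥ W *ᵥ b) := by
  have h := hW.dotProduct_mulVec_nonneg (u + b)
  have expand : (u + b) ⬝ᵥ W *ᵥ (u + b) + (u - b) ⬝ᵥ W *ᵥ (u - b)
      = 2 * (u ⬝ᵥ W *ᵥ u) + 2 * (b ⬝ᵥ W *ᵥ b) := by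
    simp only [Matrix.mulVec_add, Matrix.mulVec_sub, dotProduct_add, dotProduct_sub,
      add_dotProduct, sub_dotProduct]
    ring
  simp only [star_trivial] at h
  linarith

lemma my_sum_mulVec {m n ι : Type*} [Fintype n] [Fintype ι] (A : ι → Matrix m n ℝ)
    (e : n → ℝ) : (∑ j, A j) *ᵥ e = ∑ j, A j *ᵥ e := by
  ext i
  simp only [Matrix.mulVec, dotProduct, Finset.sum_apply, Matrix.sum_apply, Finset.sum_mul]
  rw [Finset.sum_comm]

/-- Observability-based error bound: if the weighted residual sum is at most `J̄`, the
weighted offset sum is at most `E`, and the Gramian `Σ_j M_jᵀ W_j M_j ⪰ α·Iₙ`, then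
`‖e‖ ≤ √(2(J̄+E)/α)`. -/
theorem gramian_error_bound
    (n p ℓ : ℕ) (hn : 1 ≤ n) (hp : 1 ≤ p)
    (ι : Type) [Fintype ι] (hcard : Fintype.card ι = ℓ)
    (e : Fin n → ℝ) (M : ι → Matrix (Fin p) (Fin n) ℝ) (b : ι → Fin p → ℝ)
    (W : ι → Matrix (Fin p) (Fin p) ℝ) (hW : ∀ j, (W j).PosDef)
    (Jbar E α : ℝ) (hJbar : 0 ≤ Jbar) (hE : 0 ≤ E) (hα : 0 < α)
    (h1 : ∑ j, (M j *ᵥ e + b j) ⬝ᵥ W j *ᵥ (M j *ᵥ e + b j) ≤ Jbar)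
    (h2 : ∑ j, b j ⬝ᵥ W j *ᵥ b j ≤ E)
    (h3 : ((∑ j, (M j)ᵀ * W j * M j) - α • (1 : Matrix (Fin n) (Fin n) ℝ)).PosSemidef) :
    Real.sqrt (e ⬝ᵥ e) ≤ Real.sqrt (2 * (Jbar + E) / α) := by
  have h0 : ∀ j, 0 ≤ (M j *ᵥ e + b j) ⬝ᵥ W j *ᵥ (M j *ᵥ e + b j) := fun j =>
    (hW j).posSemidef.dotProduct_mulVec_nonneg _
  have h0b : ∀ j, 0 ≤ b j ⬝ᵥ W j *ᵥ b j := fun j => (hW j).posSemidef.dotProduct_mulVec_nonneg _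
  -- Gramian quadratic form equals sum of per-term quadratic forms
  have hquad : e ⬝ᵥ (∑ j, (M j)ᵀ * W j * M j) *ᵥ e
      = ∑ j, (M j *ᵥ e) ⬝ᵥ W j *ᵥ (M j *ᵥ e) := by
    rw [my_sum_mulVec]
    rw [show e ⬝ᵥ ∑ j, ((M j)ᵀ * W j * M j) *ᵥ e = ∑ j, e ⬝ᵥ ((M j)ᵀ * W j * M j) *ᵥ e from by
      simp only [dotProduct, Finset.sum_apply, Finset.mul_sum]; rw [Finset.sum_comm]]
    refine Finset.sum_congr rfl fun j _ => ?_
    simp only [← Matrix.mulVec_mulVec, Matrix.dotProduct_mulVec, Matrix.vecMul_transpose]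
  have hpsd := h3.dotProduct_mulVec_nonneg e
  simp only [star_trivial] at hpsd
  have hsub : e ⬝ᵥ ((∑ j, (M j)ᵀ * W j * M j) - α • (1 : Matrix (Fin n) (Fin n) ℝ)) *ᵥ e
      = e ⬝ᵥ (∑ j, (M j)ᵀ * W j * M j) *ᵥ e - α * (e ⬝ᵥ e) := by
    rw [Matrix.sub_mulVec, dotProduct_sub, Matrix.smul_mulVec, Matrix.one_mulVec,
      dotProduct_smul, smul_eq_mul]
  have hkey : α * (e ⬝ᵥ e) ≤ ∑ j, (M j *ᵥ e) ⬝ᵥ W j *ᵥ (M j *ᵥ e) := by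
    rw [hsub, hquad] at hpsd; linarith
  have hterm : ∑ j, (M j *ᵥ e) ⬝ᵥ W j *ᵥ (M j *ᵥ e)
      ≤ ∑ j, (2 * ((M j *ᵥ e + b j) ⬝ᵥ W j *ᵥ (M j *ᵥ e + b j)) + 2 * (b j ⬝ᵥ W j *ᵥ b j)) := by
    refine Finset.sum_le_sum fun j _ => ?_
    have := psd_diff_bound (W j) (hW j).posSemidef (M j *ᵥ e + b j) (b j)
    simpa using this
  rw [Finset.sum_add_distrib, ← Finset.mul_sum, ← Finset.mul_sum] at hterm
  have hee : e ⬝ᵥ e ≤ 2 * (Jbar + E) / α := by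
    rw [le_div_iff₀ hα]
    nlinarith [hkey, hterm, h1, h2]
  exact Real.sqrt_le_sqrt hee
end
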